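/- Suppose M ⊆ [0,1] is countable and P ⊆ [0,1] is a nonempty perfect set. Then there is a strictly monotone map h : M → P that preserves all existing infima and suprema: for every X ⊆ M, if inf X ∈ M then h(inf X) = inf h(X), and if sup X ∈ M then h(sup X) = sup h(X). Furthermore, if inf M ∈ M, then h can be chosen such that h(inf M) = inf P. -/

import Mathlib

open MeasureTheory Set Filter Topology ENNReal


noncomputable section
abbrev G2 : Type := ℕ → ZMod 2

instance nebG2 : (𝓝[≠] (0 : G2)).NeBot := by
  rw [← mem_closure_iff_nhdsWithin_neBot]
  have h1 : Tendsto (fun n : ℕ => (Pi.single n 1 : G2)) atTop (𝓝 0) := by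
    rw [tendsto_pi_nhds]
    intro i
    apply tendsto_nhds_of_eventually_eq
    filter_upwards [eventually_gt_atTop i] with n hn
    simp [Pi.single_apply, hn.ne]
  refine mem_closure_of_tendsto h1 ?_
  filter_upwards with n
  simp only [mem_compl_iff, mem_singleton_iff]
  intro h
  have := congrFun h n
  simp at this

def haarG2 : Measure G2 := Measure.addHaarMeasure ⊤

instance noatomsHaarG2 : NullSingletonClass haarG2 :=
  @MeasureTheory.Measure.IsAddHaarMeasure.nullSingletonClass G2 _ _ _ _ _ _ _ nebG2 haarG2
    (Measure.isAddHaarMeasure_addHaarMeasure ⊤)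

lemma haarG2_univ : haarG2 Set.univ = 1 := by
  have := Measure.addHaarMeasure_self (K₀ := (⊤ : TopologicalSpace.PositiveCompacts G2))
  simpa [haarG2] using this

lemma exists_good_measure (C : Set ℝ) (hC : Perfect C) (hne : C.Nonempty) :
    ∃ μ : Measure ℝ, μ Set.univ = 1 ∧ (∀ x, μ {x} = 0) ∧ μ Cᶜ = 0 := by
  obtain ⟨f, hrange, hcont, hinj⟩ := hC.exists_nat_bool_injection hne
  let e : G2 → (ℕ → Bool) := fun x n => decide (x n = 1)
  have he : Continuous e := by
    refine continuous_pi fun n => ?_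
    exact (continuous_of_discreteTopology (f := fun v : ZMod 2 => decide (v = 1))).comp
      (continuous_apply n)
  have heinj : Function.Injective e := by
    intro x y hxy
    funext n
    have := congrFun hxy n
    simp only [e, decide_eq_decide] at this
    revert this
    generalize x n = a; generalize y n = b
    revert a b; decide
  have hm : Measurable (f ∘ e) := (hcont.comp he).measurable
  refine ⟨haarG2.map (f ∘ e), ?_, ?_, ?_⟩
  · rw [Measure.map_apply hm MeasurableSet.univ]
    simpa using haarG2_univ
  · intro x
    rw [Measure.map_apply hm (measurableSet_singleton x)]
    have hsub : ((f ∘ e) ⁻¹' {x}).Subsingleton := by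
      intro a ha b hb
      exact (hinj.comp heinj) (ha.trans hb.symm)
    exact hsub.countable.measure_zero _
  · rw [Measure.map_apply hm (hC.closed.measurableSet.compl)]
    have : (f ∘ e) ⁻¹' Cᶜ = ∅ := by
      ext a
      simp only [mem_preimage, mem_compl_iff, mem_empty_iff_false, iff_false, not_not]
      exact hrange ⟨e a, rfl⟩
    simp [this]


lemma perfect_piece (P : Set ℝ) (hP : Perfect P) (hne : P.Nonempty) (hbdd : BddBelow P)
    {c : ℝ} (hc : sInf P < c) :
    ∃ A : Set ℝ, Perfect A ∧ A.Nonempty ∧ A ⊆ P ∧ A ⊆ Set.Iic c := by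
  refine ⟨closure (Set.Iio c ∩ P), ?_, ?_, ?_, ?_⟩
  · exact (hP.acc.open_inter isOpen_Iio).perfect_closure
  · exact ⟨sInf P, subset_closure ⟨hc, hP.closed.csInf_mem hne hbdd⟩⟩
  · exact closure_minimal inter_subset_right hP.closed
  · exact closure_minimal (fun x hx => Set.mem_Iic.mpr (le_of_lt hx.1)) isClosed_Iic

lemma exists_better_measure (P : Set ℝ) (hP : Perfect P) (hne : P.Nonempty) (hbdd : BddBelow P) :
    ∃ μ : Measure ℝ, μ Set.univ = 1 ∧ (∀ x, μ {x} = 0) ∧ μ Pᶜ = 0 ∧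
      ∀ ε > 0, 0 < μ (Set.Iic (sInf P + ε)) := by
  have hstep : ∀ n : ℕ, ∃ A : Set ℝ, Perfect A ∧ A.Nonempty ∧ A ⊆ P ∧
      A ⊆ Set.Iic (sInf P + 1/(n+1)) := by
    intro n
    exact perfect_piece P hP hne hbdd (by
      have : (0:ℝ) < 1/(n+1) := by positivity
      linarith)
  choose A hAperf hAne hAP hAIic using hstep
  have hμn : ∀ n : ℕ, ∃ μ : Measure ℝ, μ Set.univ = 1 ∧ (∀ x, μ {x} = 0) ∧ μ (A n)ᶜ = 0 :=
    fun n => exists_good_measure (A n) (hAperf n) (hAne n)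
  choose ν hν1 hν2 hν3 using hμn
  set c : ℕ → ℝ≥0∞ := fun n => (2:ℝ≥0∞)⁻¹ ^ (n+1) with hc
  refine ⟨Measure.sum (fun n => c n • ν n), ?_, ?_, ?_, ?_⟩
  · rw [Measure.sum_apply _ MeasurableSet.univ]
    simp only [Measure.smul_apply, smul_eq_mul, hν1, mul_one]
    have : ∀ n : ℕ, c n = (2:ℝ≥0∞)⁻¹ ^ n * 2⁻¹ := fun n => pow_succ _ _
    simp only [this]
    rw [ENNReal.tsum_mul_right, ENNReal.tsum_geometric]
    have h2 : (1:ℝ≥0∞) - 2⁻¹ = 2⁻¹ := ENNReal.one_sub_inv_two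
    rw [h2, inv_inv]
    exact ENNReal.mul_inv_cancel (by norm_num) (by norm_num)
  · intro x
    rw [Measure.sum_apply _ (measurableSet_singleton x)]
    simp [hν2]
  · rw [Measure.sum_apply _ hP.closed.measurableSet.compl]
    have : ∀ n, ν n Pᶜ = 0 := by
      intro n
      refine le_antisymm (le_trans (measure_mono ?_) (hν3 n).le) zero_le
      exact compl_subset_compl.mpr (hAP n)
    simp [this]
  · intro ε hε
    obtain ⟨n, hn⟩ := exists_nat_one_div_lt hε
    have hA : ν n (Set.Iic (sInf P + ε)) = 1 := by
      have hsub : (A n) ⊆ Set.Iic (sInf P + ε) := by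
        intro x hx
        have h1 : x ≤ sInf P + 1/(n+1) := hAIic n hx
        exact Set.mem_Iic.mpr (by linarith [hn.le])
      have hAn1 : ν n (A n) = 1 := by
        have h := measure_add_measure_compl (μ := ν n) (hAperf n).closed.measurableSet
        rw [hν3 n, hν1 n, add_zero] at h
        exact h
      refine le_antisymm (le_trans (measure_mono (subset_univ _)) (hν1 n).le) ?_
      calc (1:ℝ≥0∞) = ν n (A n) := hAn1.symm
        _ ≤ _ := measure_mono hsub
    calc (0:ℝ≥0∞) < c n • ν n (Set.Iic (sInf P + ε)) := by
          rw [hA]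
          simp only [smul_eq_mul, mul_one, hc]
          exact ENNReal.pow_pos (by norm_num) _
      _ ≤ _ := by
          rw [Measure.sum_apply _ measurableSet_Iic]
          exact ENNReal.le_tsum n

noncomputable def gcdf (μ : Measure ℝ) : ℝ → ℝ := fun y => (μ (Set.Iic y)).toReal

lemma gcdf_nonneg (μ : Measure ℝ) (y : ℝ) : 0 ≤ gcdf μ y := ENNReal.toReal_nonneg

lemma gcdf_mono (μ : Measure ℝ) [IsFiniteMeasure μ] : Monotone (gcdf μ) := fun a b hab =>
  ENNReal.toReal_mono (measure_ne_top μ _) (measure_mono (Set.Iic_subset_Iic.mpr hab))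

lemma gcdf_le_one (μ : Measure ℝ) (hu : μ Set.univ = 1) (y : ℝ) : gcdf μ y ≤ 1 := by
  have := measure_mono (Set.subset_univ (Set.Iic y)) (μ := μ)
  rw [hu] at this
  simpa [gcdf] using ENNReal.toReal_mono (by norm_num) this

lemma gcdf_glc (μ : Measure ℝ) [IsFiniteMeasure μ] (ha : ∀ x : ℝ, μ {x} = 0)
    {y t : ℝ} (h : ∀ z < y, gcdf μ z ≤ t) : gcdf μ y ≤ t := by
  have ht0 : 0 ≤ t := le_trans (gcdf_nonneg μ (y - 1)) (h _ (by linarith))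
  have hU : Set.Iio y = ⋃ n : ℕ, Set.Iic (y - 1 / (n + 1)) := by
    ext x
    simp only [Set.mem_Iio, Set.mem_iUnion, Set.mem_Iic]
    constructor
    · intro hx
      obtain ⟨n, hn⟩ := exists_nat_one_div_lt (sub_pos.mpr hx)
      exact ⟨n, by linarith⟩
    · rintro ⟨n, hn⟩
      have : (0:ℝ) < 1 / (n + 1) := by positivity
      linarith
  have hmono : Monotone fun n : ℕ => Set.Iic (y - 1 / (n + 1)) := by
    intro m n hmn
    apply Set.Iic_subset_Iic.mpr
    have h1 : (1:ℝ) / (n + 1) ≤ 1 / (m + 1) := by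
      apply one_div_le_one_div_of_le (by positivity)
      have : (m:ℝ) ≤ n := Nat.cast_le.mpr hmn
      linarith
    linarith
  have htend := tendsto_measure_iUnion_atTop (μ := μ) hmono
  rw [← hU] at htend
  have hle : μ (Set.Iio y) ≤ ENNReal.ofReal t := by
    refine le_of_tendsto' htend fun n => ?_
    have hδ : (0:ℝ) < 1/(n+1) := by positivity
    have := h (y - 1 / (n + 1)) (by linarith)
    exact (ENNReal.le_ofReal_iff_toReal_le (measure_ne_top μ _) ht0).mpr this
  have hsplit : μ (Set.Iic y) = μ (Set.Iio y) := by
    have : Set.Iic y = Set.Iio y ∪ {y} := (Set.Iio_union_right).symm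
    rw [this, measure_union (by simp) (measurableSet_singleton y), ha y, add_zero]
  rw [gcdf, hsplit]
  exact ENNReal.toReal_le_of_le_ofReal ht0 hle

lemma gcdf_grc (μ : Measure ℝ) [IsFiniteMeasure μ]
    {y t : ℝ} (h : ∀ δ > (0:ℝ), t ≤ gcdf μ (y + δ)) : t ≤ gcdf μ y := by
  rcases le_or_gt t 0 with ht | ht
  · exact le_trans ht (gcdf_nonneg μ y)
  have hI : Set.Iic y = ⋂ n : ℕ, Set.Iic (y + 1 / (n + 1)) := by
    ext x
    simp only [Set.mem_Iic, Set.mem_iInter]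
    constructor
    · intro hx n
      have : (0:ℝ) < 1 / (n + 1) := by positivity
      linarith
    · intro hx
      by_contra hxy
      push_neg at hxy
      obtain ⟨n, hn⟩ := exists_nat_one_div_lt (sub_pos.mpr hxy)
      linarith [hx n]
  have hanti : Antitone fun n : ℕ => Set.Iic (y + 1 / (n + 1)) := by
    intro m n hmn
    apply Set.Iic_subset_Iic.mpr
    have h1 : (1:ℝ) / (n + 1) ≤ 1 / (m + 1) := by
      apply one_div_le_one_div_of_le (by positivity)
      have : (m:ℝ) ≤ n := Nat.cast_le.mpr hmn
      linarith
    linarith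
  have htend := tendsto_measure_iInter_atTop (μ := μ)
    (fun n => (measurableSet_Iic).nullMeasurableSet) hanti ⟨0, measure_ne_top μ _⟩
  rw [← hI] at htend
  have hge : ENNReal.ofReal t ≤ μ (Set.Iic y) := by
    refine ge_of_tendsto' htend fun n => ?_
    have hδ : (0:ℝ) < 1 / (n + 1) := by positivity
    have := h _ hδ
    rw [gcdf] at this
    exact (ENNReal.ofReal_le_iff_le_toReal (measure_ne_top μ _)).mpr this
  rw [gcdf]
  rw [ENNReal.ofReal_le_iff_le_toReal (measure_ne_top μ _)] at hge
  exact hge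

lemma affine_sInf {b : ℝ} (hb : 0 < b) (c : ℝ) {X : Set ℝ} (hne : X.Nonempty)
    (hbd : BddBelow X) : sInf ((fun x => b * (x - c)) '' X) = b * (sInf X - c) := by
  refine IsGLB.csInf_eq ⟨?_, ?_⟩ (hne.image _)
  · rintro y ⟨x, hx, rfl⟩
    have h1 : sInf X ≤ x := csInf_le hbd hx
    dsimp only
    nlinarith
  · intro w hw
    have h1 : w / b + c ≤ sInf X := by
      refine le_csInf hne fun x hx => ?_
      have h2 : w ≤ b * (x - c) := hw ⟨x, hx, rfl⟩
      have h3 : w / b ≤ x - c := (div_le_iff₀ hb).mpr (by nlinarith)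
      linarith
    have h4 : w / b ≤ sInf X - c := by linarith
    have := (div_le_iff₀ hb).mp h4
    linarith

lemma affine_sSup {b : ℝ} (hb : 0 < b) (c : ℝ) {X : Set ℝ} (hne : X.Nonempty)
    (hbd : BddAbove X) : sSup ((fun x => b * (x - c)) '' X) = b * (sSup X - c) := by
  refine IsLUB.csSup_eq ⟨?_, ?_⟩ (hne.image _)
  · rintro y ⟨x, hx, rfl⟩
    have h1 : x ≤ sSup X := le_csSup hbd hx
    dsimp only
    nlinarith
  · intro w hw
    have h1 : sSup X ≤ w / b + c := by
      refine csSup_le hne fun x hx => ?_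
      have h2 : b * (x - c) ≤ w := hw ⟨x, hx, rfl⟩
      have h3 : x - c ≤ w / b := (le_div_iff₀ hb).mpr (by nlinarith)
      linarith
    have h4 : sSup X - c ≤ w / b := by linarith
    have := (le_div_iff₀ hb).mp h4
    linarith

/-- Lemma 31: if M ⊆ [0,1] is countable and P ⊆ [0,1] is a nonempty
perfect set, there is a strictly monotone map h : M → P preserving all existing
(nonempty) infima and suprema; moreover if inf M ∈ M then h can be chosen with
h(inf M) = inf P. -/
theorem countable_embeds_into_perfect (M P : Set ℝ)
    (hM : M ⊆ Set.Icc 0 1) (hMc : M.Countable)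
    (hP : P ⊆ Set.Icc 0 1) (hPperf : Perfect P) (hPne : P.Nonempty) :
    ∃ h : ℝ → ℝ, Set.MapsTo h M P ∧ StrictMonoOn h M ∧
      (∀ X ⊆ M, X.Nonempty → sInf X ∈ M → h (sInf X) = sInf (h '' X)) ∧
      (∀ X ⊆ M, X.Nonempty → sSup X ∈ M → h (sSup X) = sSup (h '' X)) ∧
      (sInf M ∈ M → h (sInf M) = sInf P) := by
  classical
  have hPclosed := hPperf.closed
  have hPbdd : BddBelow P := ⟨0, fun p hp => (hP hp).1⟩
  set p₀ := sInf P with hp₀def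
  have hp₀P : p₀ ∈ P := hPclosed.csInf_mem hPne hPbdd
  have hp₀lb : ∀ p ∈ P, p₀ ≤ p := fun p hp => csInf_le hPbdd hp
  have hp₀01 : p₀ ∈ Set.Icc (0:ℝ) 1 := hP hp₀P
  obtain ⟨μ, hu, hatom, hPc0, hpos⟩ := exists_better_measure P hPperf hPne hPbdd
  haveI : IsProbabilityMeasure μ := ⟨hu⟩
  set g := gcdf μ with hgdef
  have hgmono : Monotone g := gcdf_mono μ
  have hg0 : ∀ y, y < p₀ → g y = 0 := by
    intro y hy
    have hsub : Set.Iic y ⊆ Pᶜ := by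
      intro z hz hzP
      have := hp₀lb z hzP
      have : z ≤ y := hz
      linarith [hp₀lb z hzP]
    have : μ (Set.Iic y) = 0 :=
      le_antisymm (le_trans (measure_mono hsub) hPc0.le) zero_le
    simp [hgdef, gcdf, this]
  have hg1 : g 1 = 1 := by
    have hcompl : μ (Set.Iic 1)ᶜ = 0 := by
      rw [Set.compl_Iic]
      refine le_antisymm (le_trans (measure_mono ?_) hPc0.le) zero_le
      intro z hz hzP
      have h1 := (hP hzP).2
      have h2 : (1:ℝ) < z := hz
      linarith
    have h := measure_add_measure_compl (μ := μ) (measurableSet_Iic (a := (1:ℝ)))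
    rw [hcompl, add_zero, hu] at h
    simp [hgdef, gcdf, h]
  have hgp₀ : g p₀ = 0 := by
    have hsplit : μ (Set.Iic p₀) = μ (Set.Iio p₀) := by
      have h1 : Set.Iic p₀ = Set.Iio p₀ ∪ {p₀} := (Set.Iio_union_right).symm
      rw [h1, measure_union (by simp) (measurableSet_singleton p₀), hatom p₀, add_zero]
    have hio : μ (Set.Iio p₀) = 0 := by
      refine le_antisymm (le_trans (measure_mono ?_) hPc0.le) zero_le
      intro z hz hzP
      have h2 : z < p₀ := hz
      linarith [hp₀lb z hzP]
    simp [hgdef, gcdf, hsplit, hio]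
  -- the quantile function
  set E : ℝ → Set ℝ := fun t => {y : ℝ | t ≤ g y} with hEdef
  set hq : ℝ → ℝ := fun t => if t ≤ 0 then p₀ else sInf (E t) with hhqdef
  have hE1 : ∀ t, t ≤ 1 → (1:ℝ) ∈ E t := fun t ht => by
    simp only [hEdef, Set.mem_setOf_eq, hg1]; exact ht
  have hElb : ∀ t, 0 < t → ∀ y ∈ E t, p₀ ≤ y := by
    intro t ht y hy
    by_contra hc
    push_neg at hc
    have := hg0 y hc
    have h2 : t ≤ g y := hy
    linarith
  have hEbdd : ∀ t, 0 < t → BddBelow (E t) := fun t ht => ⟨p₀, fun y hy => hElb t ht y hy⟩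
  have hqpos : ∀ t, 0 < t → hq t = sInf (E t) := fun t ht => by
    simp [hhqdef, not_le.mpr ht]
  have hq0 : ∀ t, t ≤ 0 → hq t = p₀ := fun t ht => by simp [hhqdef, ht]
  have hqmem : ∀ t, 0 < t → t ≤ 1 → t ≤ g (hq t) := by
    intro t ht ht1
    rw [hqpos t ht]
    refine gcdf_grc μ fun δ hδ => ?_
    obtain ⟨y, hy, hylt⟩ := Real.lt_sInf_add_pos ⟨1, hE1 t ht1⟩ hδ
    exact le_trans hy (hgmono hylt.le)
  have hqlt : ∀ t z, 0 < t → z < hq t → g z < t := by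
    intro t z ht hz
    by_contra hc
    push_neg at hc
    have : z ∈ E t := hc
    have := csInf_le (hEbdd t ht) this
    rw [hqpos t ht] at hz
    linarith
  have hqgep : ∀ t, 0 < t → t ≤ 1 → p₀ ≤ hq t := by
    intro t ht ht1
    rw [hqpos t ht]
    exact le_csInf ⟨1, hE1 t ht1⟩ (hElb t ht)
  have hqle1 : ∀ t, 0 < t → t ≤ 1 → hq t ≤ 1 := by
    intro t ht ht1
    rw [hqpos t ht]
    exact csInf_le (hEbdd t ht) (hE1 t ht1)
  have hqP : ∀ t, 0 < t → t ≤ 1 → hq t ∈ P := by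
    intro t ht ht1
    by_contra hyP
    obtain ⟨ε, hε, hball⟩ := Metric.isOpen_iff.mp hPclosed.isOpen_compl (hq t) hyP
    rw [Real.ball_eq_Ioo] at hball
    have hIoc : μ (Set.Ioc (hq t - ε) (hq t)) = 0 := by
      refine le_antisymm (le_trans (measure_mono ?_) hPc0.le) zero_le
      intro z hz
      exact hball ⟨hz.1, by linarith [hz.2]⟩
    have hsplit : μ (Set.Iic (hq t)) = μ (Set.Iic (hq t - ε)) := by
      have h1 : Set.Iic (hq t - ε) ∪ Set.Ioc (hq t - ε) (hq t) = Set.Iic (hq t) :=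
        Set.Iic_union_Ioc_eq_Iic (by linarith)
      rw [← h1, measure_union ?_ measurableSet_Ioc, hIoc, add_zero]
      exact Set.disjoint_left.mpr fun z hz1 hz2 => absurd hz2.1 (not_lt.mpr hz1)
    have hgeq : g (hq t) = g (hq t - ε) := by simp [hgdef, gcdf, hsplit]
    have h1 := hqmem t ht ht1
    have h2 := hqlt t (hq t - ε) ht (by linarith)
    linarith [hgeq ▸ h1]
  have hqsm : StrictMonoOn hq (Set.Icc 0 1) := by
    intro a ha b hb hab
    rcases le_or_gt a 0 with ha0 | ha0
    · have ha0' : a = 0 := le_antisymm ha0 ha.1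
      have hb0 : 0 < b := ha0' ▸ hab
      rw [hq0 a ha0]
      rcases eq_or_lt_of_le (hqgep b hb0 hb.2) with heq | hlt
      · exfalso
        have := hqmem b hb0 hb.2
        rw [← heq, hgp₀] at this
        linarith
      · exact hlt
    · have hb0 : 0 < b := lt_trans ha0 hab
      have hle : hq a ≤ hq b := by
        rw [hqpos a ha0, hqpos b hb0]
        refine csInf_le_csInf (hEbdd a ha0) ⟨1, hE1 b hb.2⟩ ?_
        intro y hy
        exact le_trans hab.le hy
      rcases eq_or_lt_of_le hle with heq | hlt
      · exfalso
        have h1 : g (hq a) ≤ a := gcdf_glc μ hatom fun z hz => (hqlt a z ha0 hz).le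
        have h2 := hqmem b hb0 hb.2
        rw [← heq] at h2
        linarith
      · exact hlt
  have hqmonoOn : MonotoneOn hq (Set.Icc 0 1) := hqsm.monotoneOn
  -- sup lemma
  have hS : ∀ T ⊆ Set.Icc (0:ℝ) 1, T.Nonempty → hq (sSup T) = sSup (hq '' T) := by
    intro T hT hTne
    obtain ⟨t1, ht1⟩ := id hTne
    have hTbddA : BddAbove T := ⟨1, fun t ht => (hT ht).2⟩
    have ht₀mem : sSup T ∈ Set.Icc (0:ℝ) 1 :=
      ⟨le_trans (hT ht1).1 (le_csSup hTbddA ht1), csSup_le hTne fun t ht => (hT ht).2⟩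
    have hub : ∀ y ∈ hq '' T, y ≤ hq (sSup T) := by
      rintro y ⟨t, ht, rfl⟩
      exact hqmonoOn (hT ht) ht₀mem (le_csSup hTbddA ht)
    have hbddim : BddAbove (hq '' T) := ⟨hq (sSup T), hub⟩
    refine le_antisymm ?_ (csSup_le (hTne.image _) hub)
    rcases le_or_gt (sSup T) 0 with ht₀ | ht₀
    · have h1 : t1 = sSup T := le_antisymm (le_csSup hTbddA ht1)
        (le_trans ht₀ (hT ht1).1)
      rw [← h1]
      exact le_csSup hbddim ⟨t1, ht1, rfl⟩
    · have hmem : sSup (hq '' T) ∈ E (sSup T) := by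
        have hgs : ∀ t ∈ T, t ≤ g (sSup (hq '' T)) := by
          intro t ht
          rcases le_or_gt t 0 with ht0 | ht0
          · exact le_trans ht0 (gcdf_nonneg μ _)
          · calc t ≤ g (hq t) := hqmem t ht0 (hT ht).2
              _ ≤ g (sSup (hq '' T)) := hgmono (le_csSup hbddim ⟨t, ht, rfl⟩)
        exact csSup_le hTne hgs
      rw [hqpos _ ht₀]
      exact csInf_le (hEbdd _ ht₀) hmem
  -- inf lemma
  have hI : ∀ T ⊆ Set.Icc (0:ℝ) 1, T.Nonempty → sInf T ∉ T →
      (sInf T = 0 ∨ (0 < sInf T ∧ ∀ q : ℚ, g q ≠ sInf T)) →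
      hq (sInf T) = sInf (hq '' T) := by
    intro T hT hTne hnmem hcases
    have hTbddB : BddBelow T := ⟨0, fun t ht => (hT ht).1⟩
    have hTpos : ∀ t ∈ T, 0 < t := by
      intro t ht
      rcases hcases with h0 | ⟨hpos', _⟩
      · rcases eq_or_lt_of_le (hT ht).1 with heq | hlt
        · exact absurd (show sInf T ∈ T by rw [h0, heq]; exact ht) hnmem
        · exact hlt
      · have := csInf_le hTbddB ht
        linarith
    have hlbim : ∀ y ∈ hq '' T, p₀ ≤ y := by
      rintro y ⟨t, ht, rfl⟩
      exact hqgep t (hTpos t ht) (hT ht).2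
    have hbddim : BddBelow (hq '' T) := ⟨p₀, hlbim⟩
    rcases hcases with h0 | ⟨hpos', hrat⟩
    · rw [h0, hq0 0 le_rfl]
      refine le_antisymm (le_csInf (hTne.image _) hlbim) ?_
      refine le_of_forall_pos_le_add fun ε hε => ?_
      have hgc : 0 < g (p₀ + ε) := by
        have := hpos ε hε
        exact ENNReal.toReal_pos (ne_of_gt this) (measure_ne_top μ _)
      obtain ⟨t, ht, htlt⟩ := exists_lt_of_csInf_lt hTne (by rw [h0]; exact hgc)
      have h2 : hq t ≤ p₀ + ε := by
        rw [hqpos t (hTpos t ht)]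
        exact csInf_le (hEbdd t (hTpos t ht)) (le_of_lt htlt)
      exact le_trans (csInf_le hbddim ⟨t, ht, rfl⟩) h2
    · have ht₀mem : sInf T ∈ Set.Icc (0:ℝ) 1 := by
        obtain ⟨t1, ht1⟩ := hTne
        exact ⟨hpos'.le, le_trans (csInf_le hTbddB ht1) (hT ht1).2⟩
      refine le_antisymm ?_ ?_
      · refine le_csInf (hTne.image _) ?_
        rintro y ⟨t, ht, rfl⟩
        exact hqmonoOn ht₀mem (hT ht) (csInf_le hTbddB ht)
      · by_contra hlt
        push_neg at hlt
        obtain ⟨q, hq1, hq2⟩ := exists_rat_btwn hlt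
        have hgq_lt : ∀ t ∈ T, g q < t := by
          intro t ht
          refine hqlt t q (hTpos t ht) ?_
          exact lt_of_lt_of_le hq2 (csInf_le hbddim ⟨t, ht, rfl⟩)
        have h1 : g q ≤ sInf T := le_csInf hTne fun t ht => (hgq_lt t ht).le
        have h2 : sInf T ≤ g q :=
          le_trans (hqmem _ hpos' ht₀mem.2) (hgmono hq1.le)
        exact hrat q (le_antisymm h1 h2)
  -- choice of the slope b
  set m₀ := sInf M with hm₀def
  set BB : Set ℝ := ⋃ m ∈ M, Set.range (fun q : ℚ => g q / (m - m₀)) with hBBdef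
  have hBBc : BB.Countable := hMc.biUnion fun m _ => Set.countable_range _
  have hIooBB : ¬ (Set.Ioo (0:ℝ) 1 ⊆ BB) := by
    intro hsub
    have h1 : (volume (Set.Ioo (0:ℝ) 1)) = 0 :=
      le_antisymm (le_trans (measure_mono hsub) (hBBc.measure_zero volume).le) zero_le
    rw [Real.volume_Ioo] at h1
    simp at h1
  obtain ⟨b, hbIoo, hbBB⟩ := Set.not_subset.mp hIooBB
  have hb0 : 0 < b := hbIoo.1
  have hb1 : b < 1 := hbIoo.2
  set φ : ℝ → ℝ := fun x => b * (x - m₀) with hφdef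
  set h : ℝ → ℝ := fun x => hq (φ x) with hhdef
  have hMbddB : BddBelow M := ⟨0, fun m hm => (hM hm).1⟩
  have hMbddA : BddAbove M := ⟨1, fun m hm => (hM hm).2⟩
  have hm₀le : ∀ m ∈ M, m₀ ≤ m := fun m hm => csInf_le hMbddB hm
  have hm₀0 : ∀ m ∈ M, 0 ≤ m₀ := fun m hm => le_csInf ⟨m, hm⟩ fun x hx => (hM hx).1
  have hφmem : ∀ m ∈ M, φ m ∈ Set.Icc (0:ℝ) 1 := by
    intro m hm
    constructor
    · have := hm₀le m hm
      simp only [hφdef]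
      nlinarith
    · have h1 : m - m₀ ≤ 1 := by
        have := (hM hm).2
        have := hm₀0 m hm
        linarith
      simp only [hφdef]
      nlinarith
  have hφsm : ∀ x y, x < y → φ x < φ y := by
    intro x y hxy
    simp only [hφdef]
    nlinarith
  have hφinj : ∀ x y, φ x = φ y → x = y := by
    intro x y hxy
    simp only [hφdef] at hxy
    have := mul_left_cancel₀ hb0.ne' hxy
    linarith
  have hmapsto : Set.MapsTo h M P := by
    intro m hm
    rcases le_or_gt (φ m) 0 with h0 | h0
    · simp only [hhdef]; rw [hq0 _ h0]; exact hp₀P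
    · exact hqP (φ m) h0 (hφmem m hm).2
  have hsm : StrictMonoOn h M := by
    intro x hx y hy hxy
    exact hqsm (hφmem x hx) (hφmem y hy) (hφsm x y hxy)
  have hmono : ∀ x ∈ M, ∀ y ∈ M, x ≤ y → h x ≤ h y := by
    intro x hx y hy hxy
    rcases eq_or_lt_of_le hxy with heq | hlt
    · rw [heq]
    · exact (hsm hx hy hlt).le
  have himage : ∀ X : Set ℝ, h '' X = hq '' (φ '' X) := by
    intro X
    rw [Set.image_image]
  refine ⟨h, hmapsto, hsm, ?_, ?_, ?_⟩
  · -- infima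
    intro X hXM hXne hXinf
    rcases Classical.em (sInf X ∈ X) with hmem | hnmem
    · refine (IsLeast.csInf_eq ⟨Set.mem_image_of_mem h hmem, ?_⟩).symm
      rintro y ⟨x, hx, rfl⟩
      exact hmono _ hXinf _ (hXM hx) (csInf_le ⟨0, fun t ht => (hM (hXM ht)).1⟩ hx)
    · have hXbddB : BddBelow X := ⟨0, fun t ht => (hM (hXM ht)).1⟩
      have hTsub : φ '' X ⊆ Set.Icc (0:ℝ) 1 := by
        rintro y ⟨x, hx, rfl⟩
        exact hφmem x (hXM hx)
      have hTinf : sInf (φ '' X) = φ (sInf X) := affine_sInf hb0 m₀ hXne hXbddB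
      have hTnmem : sInf (φ '' X) ∉ φ '' X := by
        rw [hTinf]
        rintro ⟨x, hx, hxeq⟩
        exact hnmem (hφinj x (sInf X) hxeq ▸ hx)
      have hcases : sInf (φ '' X) = 0 ∨
          (0 < sInf (φ '' X) ∧ ∀ q : ℚ, g q ≠ sInf (φ '' X)) := by
        rcases eq_or_lt_of_le (hm₀le (sInf X) hXinf) with heq | hlt
        · left; rw [hTinf]; simp [hφdef, ← heq]
        · right
          constructor
          · rw [hTinf]
            show 0 < b * (sInf X - m₀)
            nlinarith
          · intro q hgq
            apply hbBB
            rw [hTinf] at hgq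
            have hd : sInf X - m₀ ≠ 0 := ne_of_gt (by linarith)
            have hmemrange : b ∈ Set.range (fun q : ℚ => g q / (sInf X - m₀)) := by
              refine ⟨q, ?_⟩
              show g q / (sInf X - m₀) = b
              rw [div_eq_iff hd, hgq]
            rw [hBBdef]
            exact Set.mem_biUnion hXinf hmemrange
      have := hI (φ '' X) hTsub (hXne.image _) hTnmem hcases
      rw [hTinf] at this
      rw [himage]
      exact this
  · -- suprema
    intro X hXM hXne _
    have hXbddA : BddAbove X := ⟨1, fun t ht => (hM (hXM ht)).2⟩
    have hTsub : φ '' X ⊆ Set.Icc (0:ℝ) 1 := by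
      rintro y ⟨x, hx, rfl⟩
      exact hφmem x (hXM hx)
    have hTsup : sSup (φ '' X) = φ (sSup X) := affine_sSup hb0 m₀ hXne hXbddA
    have := hS (φ '' X) hTsub (hXne.image _)
    rw [hTsup] at this
    rw [himage]
    exact this
  · -- value at inf M
    intro _
    simp only [hhdef, hφdef]
    rw [show b * (sInf M - m₀) = 0 by rw [hm₀def]; ring]
    exact hq0 0 le_rfl
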